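/- Let 𝒞 be a class of Baire spaces closed under taking dense G_δ-subsets. A game determined Tychonoff space X is 𝒞-Piotrowski if and only if it is 𝒞-Stegall, and X is strong 𝒞-Piotrowski if and only if it is strong 𝒞-Stegall. -/

import Mathlib

open Topology Set

universe u v

/-- `f` is quasicontinuous at `x`. -/
def QuasiContinuousAt {X : Type*} {Y : Type*} [TopologicalSpace X] [TopologicalSpace Y]
    (f : X → Y) (x : X) : Prop :=
  ∀ Ox ∈ nhds x, ∀ Oy ∈ nhds (f x),
    ∃ U : Set X, IsOpen U ∧ U.Nonempty ∧ U ⊆ Ox ∧ f '' U ⊆ Oy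

/-- `f` is quasicontinuous. -/
def QuasiContinuous {X Y : Type*} [TopologicalSpace X] [TopologicalSpace Y] (f : X → Y) : Prop :=
  ∀ x, QuasiContinuousAt f x

/-- The set of continuity points of a map. -/
def ContinuityPoints {Z X : Type*} [TopologicalSpace Z] [TopologicalSpace X] (f : Z → X) :
    Set Z :=
  {z | ContinuousAt f z}

/-- A multivalued map (represented as `Φ : Z → Set X`) is usco if it has nonempty compact
values and is upper semicontinuous. -/
def IsUsco {Z X : Type*} [TopologicalSpace Z] [TopologicalSpace X] (Φ : Z → Set X) : Prop :=
  (∀ z, (Φ z).Nonempty) ∧ (∀ z, IsCompact (Φ z)) ∧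
    ∀ U : Set X, IsOpen U → IsOpen {z | Φ z ⊆ U}

/-- A minimal usco map. -/
def IsMinimalUsco {Z X : Type*} [TopologicalSpace Z] [TopologicalSpace X] (Φ : Z → Set X) :
    Prop :=
  IsUsco Φ ∧ ∀ Ψ : Z → Set X, IsUsco Ψ → (∀ z, Ψ z ⊆ Φ z) → Ψ = Φ

/-- `Φ` is single-valued at `z`. -/
def SingleValuedAt {Z X : Type*} (Φ : Z → Set X) (z : Z) : Prop := ∃ x, Φ z = {x}

/-- A class of topological spaces (in universe `u`). -/
def SpaceClass : Type (u + 1) := ∀ Z : Type u, TopologicalSpace Z → Prop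

/-- All members of the class are Baire spaces. -/
def IsBaireClass (P : SpaceClass.{u}) : Prop :=
  ∀ (Z : Type u) [tZ : TopologicalSpace Z], P Z tZ → BaireSpace Z

/-- The class is closed under taking open subspaces. -/
def ClosedUnderOpenSubspaces (P : SpaceClass.{u}) : Prop :=
  ∀ (Z : Type u) [tZ : TopologicalSpace Z], P Z tZ →
    ∀ U : Set Z, IsOpen U → P ↥U inferInstance

/-- The class is closed under taking dense `Gδ`-subspaces. -/
def ClosedUnderDenseGdelta (P : SpaceClass.{u}) : Prop :=
  ∀ (Z : Type u) [tZ : TopologicalSpace Z], P Z tZ →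
    ∀ S : Set Z, Dense S → IsGδ S → P ↥S inferInstance

/-- The class is closed under taking dense Baire subspaces. -/
def ClosedUnderDenseBaire (P : SpaceClass.{u}) : Prop :=
  ∀ (Z : Type u) [tZ : TopologicalSpace Z], P Z tZ →
    ∀ S : Set Z, Dense S → BaireSpace ↥S → P ↥S inferInstance

/-- `X` is `𝒞`-Piotrowski: every quasicontinuous map from a nonempty member of the class `𝒞`
to `X` has a continuity point. -/
def IsPiotrowskiFor (P : SpaceClass.{u}) (X : Type v) [TopologicalSpace X] : Prop :=
  ∀ (Z : Type u) [tZ : TopologicalSpace Z], P Z tZ → Nonempty Z →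
    ∀ f : Z → X, QuasiContinuous f → ∃ z, ContinuousAt f z

/-- `X` is strong `𝒞`-Piotrowski: for every quasicontinuous map from a member of `𝒞` to `X`
the set of continuity points is comeager. -/
def IsStrongPiotrowskiFor (P : SpaceClass.{u}) (X : Type v) [TopologicalSpace X] : Prop :=
  ∀ (Z : Type u) [tZ : TopologicalSpace Z], P Z tZ →
    ∀ f : Z → X, QuasiContinuous f → ContinuityPoints f ∈ residual Z

/-- `X` is `𝒞`-Stegall. -/
def IsStegallFor (P : SpaceClass.{u}) (X : Type v) [TopologicalSpace X] : Prop :=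
  ∀ (Z : Type u) [tZ : TopologicalSpace Z], P Z tZ → Nonempty Z →
    ∀ Φ : Z → Set X, IsMinimalUsco Φ → ∃ z, SingleValuedAt Φ z

/-- `X` is strong `𝒞`-Stegall. -/
def IsStrongStegallFor (P : SpaceClass.{u}) (X : Type v) [TopologicalSpace X] : Prop :=
  ∀ (Z : Type u) [tZ : TopologicalSpace Z], P Z tZ →
    ∀ Φ : Z → Set X, IsMinimalUsco Φ → {z | SingleValuedAt Φ z} ∈ residual Z

/-- The class of all Baire spaces (in universe `u`). -/
def BaireClass : SpaceClass.{u} := fun Z tZ => @BaireSpace Z tZ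

/-- `X` is Piotrowski. -/
def IsPiotrowski (X : Type v) [TopologicalSpace X] : Prop :=
  IsPiotrowskiFor BaireClass.{u} X

/-- `d` is a metric on `X` (not necessarily related to the topology of `X`). -/
structure IsMetric {X : Type*} (d : X → X → ℝ) : Prop where
  self : ∀ x, d x x = 0
  eq_of : ∀ x y, d x y = 0 → x = y
  symm : ∀ x y, d x y = d y x
  triangle : ∀ x y z, d x z ≤ d x y + d y z

/-- `X` is fragmented by `d`: every nonempty subset has a nonempty relatively open subset of
`d`-diameter `< ε`. -/
def FragmentedBy (X : Type*) [TopologicalSpace X] (d : X → X → ℝ) : Prop :=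
  ∀ ε : ℝ, 0 < ε → ∀ A : Set X, A.Nonempty →
    ∃ V : Set X, IsOpen V ∧ (A ∩ V).Nonempty ∧ ∀ x ∈ A ∩ V, ∀ y ∈ A ∩ V, d x y < ε

/-- The topology generated by `d` is finer than the topology of `X`. -/
def MetricTopFiner (X : Type*) [TopologicalSpace X] (d : X → X → ℝ) : Prop :=
  ∀ U : Set X, IsOpen U → ∀ x ∈ U, ∃ ε : ℝ, 0 < ε ∧ {y | d x y < ε} ⊆ U

/-- `X` is fragmentable. -/
def Fragmentable (X : Type*) [TopologicalSpace X] : Prop :=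
  ∃ d : X → X → ℝ, IsMetric d ∧ FragmentedBy X d

/-- `X` is strictly fragmented by the metric `d`. -/
def StrictlyFragmentedBy (X : Type*) [TopologicalSpace X] (d : X → X → ℝ) : Prop :=
  IsMetric d ∧ FragmentedBy X d ∧ MetricTopFiner X d

/-- `X` is strictly fragmentable. -/
def StrictlyFragmentable (X : Type*) [TopologicalSpace X] : Prop :=
  ∃ d : X → X → ℝ, StrictlyFragmentedBy X d

/-- The countable family `𝒰` separates the points of `S` from the points of `Sᶜ`:
some member of the family contains exactly one point of any pair `x ∈ S`, `y ∉ S`. -/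
def SeparatesFrom {K : Type*} (𝒰 : ℕ → Set K) (S : Set K) : Prop :=
  ∀ x ∈ S, ∀ y ∈ Sᶜ, ∃ n, (x ∈ 𝒰 n ∧ y ∉ 𝒰 n) ∨ (x ∉ 𝒰 n ∧ y ∈ 𝒰 n)

/-- `X` has countable separation: some compactification `K` of `X` carries a countable family
of open sets separating the points of (the copy of) `X` from the points of `K \ X`. -/
def HasCountableSeparation (X : Type u) [TopologicalSpace X] : Prop :=
  ∃ (K : Type u) (tK : TopologicalSpace K), @CompactSpace K tK ∧ @T2Space K tK ∧
    ∃ e : X → K, @Topology.IsEmbedding X K _ tK e ∧ @DenseRange K tK X e ∧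
      ∃ 𝒰 : ℕ → Set K, (∀ n, @IsOpen K tK (𝒰 n)) ∧ SeparatesFrom 𝒰 (Set.range e)

/-- `X` is game determined: the player `Ω` has a winning strategy in the determination game
`DG(X)`. A strategy of `Ω` is a rule `σ` assigning to the moves `A 0, …, A n` of `Σ` the
answer `σ n (A 0, …, A n)`; it must produce a nonempty relatively open subset of the last
move of `Σ` along every legal partial play, and for every infinite legal play the set
`K = ⋂ n, closure (A n)` must be compact and either empty or such that every open
neighborhood of `K` contains all but finitely many of the sets `A n`. -/
def GameDetermined (X : Type v) [TopologicalSpace X] : Prop :=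
  ∃ σ : (n : ℕ) → (Fin (n + 1) → Set X) → Set X,
    (∀ (A : ℕ → Set X) (n : ℕ),
      ((A 0).Nonempty ∧ ∀ k, k < n → (A (k + 1)).Nonempty ∧ A (k + 1) ⊆ σ k (fun i => A i.1)) →
      (σ n (fun i => A i.1)).Nonempty ∧
        ∃ V : Set X, IsOpen V ∧ σ n (fun i => A i.1) = A n ∩ V) ∧
    (∀ A : ℕ → Set X,
      ((A 0).Nonempty ∧ ∀ k, (A (k + 1)).Nonempty ∧ A (k + 1) ⊆ σ k (fun i => A i.1)) →
      IsCompact (⋂ n, closure (A n)) ∧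
        ((⋂ n, closure (A n)) = ∅ ∨
          ∀ V : Set X, IsOpen V → (⋂ n, closure (A n)) ⊆ V → ∃ m, ∀ n, m ≤ n → A n ⊆ V))

section MinimalUscoAux

variable {Z : Type*} {X : Type*} [TopologicalSpace Z] [TopologicalSpace X]

/-- The key property of minimal usco maps: if `Φ` hits an open set `W` somewhere on an
open set `U`, then it maps some nonempty open subset of `U` into `W`. -/
lemma IsMinimalUsco.exists_sub {Φ : Z → Set X} (hΦ : IsMinimalUsco Φ)
    {U : Set Z} (hU : IsOpen U) {W : Set X} (hW : IsOpen W)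
    {z₀ : Z} (hz₀ : z₀ ∈ U) (hmeet : (Φ z₀ ∩ W).Nonempty) :
    ∃ V : Set Z, IsOpen V ∧ V.Nonempty ∧ V ⊆ U ∧ ∀ v ∈ V, Φ v ⊆ W := by
  classical
  by_contra H
  push_neg at H
  have H' : ∀ V : Set Z, IsOpen V → V.Nonempty → V ⊆ U → ∃ v ∈ V, (Φ v ∩ Wᶜ).Nonempty := by
    intro V hVo hVne hVU
    obtain ⟨v, hv, hsub⟩ := H V hVo hVne hVU
    rcases Set.not_subset.1 hsub with ⟨x, hx1, hx2⟩
    exact ⟨v, hv, x, hx1, hx2⟩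
  set Ψ : Z → Set X := fun z => if z ∈ U then Φ z ∩ Wᶜ else Φ z with hΨdef
  have hne : ∀ z ∈ U, (Φ z ∩ Wᶜ).Nonempty := by
    intro z hz
    by_contra hc
    have hsub : Φ z ⊆ W := by
      intro x hx
      by_contra hxW
      exact hc ⟨x, hx, hxW⟩
    set N := {z' | Φ z' ⊆ W} ∩ U with hN
    have hNo : IsOpen N := (hΦ.1.2.2 W hW).inter hU
    have hzN : z ∈ N := ⟨hsub, hz⟩
    obtain ⟨v, hvN, x, hx1, hx2⟩ := H' N hNo ⟨z, hzN⟩ (Set.inter_subset_right)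
    exact hx2 (hvN.1 hx1)
  have hΨval : ∀ z, Ψ z ⊆ Φ z := by
    intro z
    simp only [hΨdef]
    split_ifs <;> simp [Set.inter_subset_left, Set.Subset.rfl]
  have hΨusco : IsUsco Ψ := by
    refine ⟨?_, ?_, ?_⟩
    · intro z
      simp only [hΨdef]
      split_ifs with h
      · exact hne z h
      · exact hΦ.1.1 z
    · intro z
      simp only [hΨdef]
      split_ifs with h
      · exact (hΦ.1.2.1 z).inter_right hW.isClosed_compl
      · exact hΦ.1.2.1 z
    · intro O hO
      rw [isOpen_iff_forall_mem_open]
      intro z hz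
      simp only [Set.mem_setOf_eq] at hz
      by_cases h : z ∈ U
      · refine ⟨{z' | Φ z' ⊆ O ∪ W} ∩ U, ?_, (hΦ.1.2.2 _ (hO.union hW)).inter hU, ?_⟩
        · intro z' ⟨hz'1, hz'2⟩
          simp only [Set.mem_setOf_eq, hΨdef, if_pos hz'2]
          intro x ⟨hx1, hx2⟩
          rcases hz'1 hx1 with h1 | h1
          · exact h1
          · exact absurd h1 hx2
        · refine ⟨?_, h⟩
          simp only [hΨdef, if_pos h] at hz
          intro x hx
          by_cases hxW : x ∈ W
          · exact Or.inr hxW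
          · exact Or.inl (hz ⟨hx, hxW⟩)
      · refine ⟨{z' | Φ z' ⊆ O}, ?_, hΦ.1.2.2 _ hO, ?_⟩
        · intro z' hz'
          simp only [Set.mem_setOf_eq] at hz' ⊢
          exact (hΨval z').trans hz'
        · simpa only [Set.mem_setOf_eq, hΨdef, if_neg h] using hz
  have heq := hΦ.2 Ψ hΨusco hΨval
  obtain ⟨y, hy1, hy2⟩ := hmeet
  have : y ∈ Ψ z₀ := heq ▸ hy1
  simp only [hΨdef, if_pos hz₀] at this
  exact this.2 hy2

/-- Every selection of a minimal usco map is quasicontinuous. -/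
lemma IsMinimalUsco.quasiContinuous_selection {Φ : Z → Set X} (hΦ : IsMinimalUsco Φ)
    {f : Z → X} (hf : ∀ z, f z ∈ Φ z) : QuasiContinuous f := by
  intro z Ox hOx Oy hOy
  obtain ⟨U, hUsub, hUo, hUz⟩ := mem_nhds_iff.1 hOx
  obtain ⟨W, hWsub, hWo, hWz⟩ := mem_nhds_iff.1 hOy
  obtain ⟨V, hVo, hVne, hVU, hVsub⟩ := hΦ.exists_sub hUo hWo hUz ⟨f z, hf z, hWz⟩
  refine ⟨V, hVo, hVne, hVU.trans hUsub, ?_⟩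
  rintro y ⟨v, hv, rfl⟩
  exact hWsub (hVsub v hv (hf v))

/-- At a continuity point of a selection, a minimal usco map into a T₃ space is
single-valued. -/
lemma IsMinimalUsco.singleValuedAt_of_continuousAt [T1Space X] [RegularSpace X]
    {Φ : Z → Set X} (hΦ : IsMinimalUsco Φ) {f : Z → X} (hf : ∀ z, f z ∈ Φ z)
    {z : Z} (hc : ContinuousAt f z) : SingleValuedAt Φ z := by
  refine ⟨f z, Set.eq_singleton_iff_unique_mem.2 ⟨hf z, ?_⟩⟩
  intro y hy
  by_contra hne
  -- find open W ∋ f z with y ∉ closure W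
  have h1 : {y}ᶜ ∈ nhds (f z) := isOpen_compl_singleton.mem_nhds (by simpa using fun h => hne h.symm)
  obtain ⟨C, hCn, hCc, hCsub⟩ := exists_mem_nhds_isClosed_subset h1
  set W := interior C with hWdef
  have hWo : IsOpen W := isOpen_interior
  have hWz : f z ∈ W := mem_interior_iff_mem_nhds.2 hCn
  have hWcl : closure W ⊆ C := closure_minimal interior_subset hCc
  have hyW : y ∉ closure W := fun h => (hCsub (hWcl h)) rfl
  -- continuity gives a neighborhood mapped into W
  obtain ⟨U, hUsub, hUo, hUz⟩ := mem_nhds_iff.1 (hc (hWo.mem_nhds hWz))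
  -- claim: Φ z' ⊆ closure W for all z' ∈ U
  have hclaim : ∀ z' ∈ U, Φ z' ⊆ closure W := by
    intro z' hz'
    by_contra hsub
    rcases Set.not_subset.1 hsub with ⟨x, hx1, hx2⟩
    obtain ⟨V, hVo, hVne, hVU, hVsub⟩ :=
      hΦ.exists_sub hUo isClosed_closure.isOpen_compl hz' ⟨x, hx1, hx2⟩
    obtain ⟨v, hv⟩ := hVne
    have h2 : f v ∈ W := hUsub (hVU hv)
    exact hVsub v hv (hf v) (subset_closure h2)
  exact hyW (hclaim z hUz hy)

/-- Every usco map into a Hausdorff space contains a minimal usco map. -/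
lemma IsUsco.exists_minimal [T2Space X] {Φ : Z → Set X} (hΦ : IsUsco Φ) :
    ∃ Ψ : Z → Set X, IsMinimalUsco Ψ ∧ ∀ z, Ψ z ⊆ Φ z := by
  -- Zorn's lemma on graphs
  set sl : Set (Z × X) → Z → Set X := fun A z => {x | (z, x) ∈ A} with hsl
  set S : Set (Set (Z × X)) := {A | IsUsco (sl A) ∧ ∀ z, sl A z ⊆ Φ z} with hS
  have hchain : ∀ c ⊆ S, IsChain (· ⊆ ·) c → c.Nonempty → ∃ lb ∈ S, ∀ s ∈ c, lb ⊆ s := by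
    intro c hcS hchain ⟨A₀, hA₀⟩
    haveI : Nonempty c := ⟨⟨A₀, hA₀⟩⟩
    have hdir : ∀ z : Z, ∀ F : Set X, IsClosed F →
        Directed (· ⊇ ·) (fun A : c => sl A.1 z ∩ F) := by
      intro z F _ A B
      rcases hchain.total A.2 B.2 with h' | h'
      · exact ⟨A, Set.Subset.rfl, Set.inter_subset_inter_left F (fun x hx => h' hx)⟩
      · exact ⟨B, Set.inter_subset_inter_left F (fun x hx => h' hx), Set.Subset.rfl⟩
    have hcl : ∀ (A : c) z, IsClosed (sl A.1 z) := fun A z =>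
      ((hcS A.2).1.2.1 z).isClosed
    have hkey : ∀ z : Z, ∀ F : Set X, IsClosed F → (∀ A : c, (sl A.1 z ∩ F).Nonempty) →
        ((⋂ A : c, sl A.1 z) ∩ F).Nonempty := by
      intro z F hF hne
      have := IsCompact.nonempty_iInter_of_directed_nonempty_isCompact_isClosed
        (fun A : c => sl A.1 z ∩ F) (hdir z F hF) hne
        (fun A => ((hcS A.2).1.2.1 z).inter_right hF)
        (fun A => (hcl A z).inter hF)
      obtain ⟨x, hx⟩ := this
      simp only [Set.mem_iInter, Set.mem_inter_iff] at hx
      exact ⟨x, Set.mem_iInter.2 fun A => (hx A).1, (hx (Classical.arbitrary c)).2⟩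
    refine ⟨⋂₀ c, ⟨⟨?_, ?_, ?_⟩, ?_⟩, fun A hA => Set.sInter_subset_of_mem hA⟩
    · intro z
      have hslz : sl (⋂₀ c) z = ⋂ A : c, sl A.1 z := by
        ext x
        simp [hsl, Set.mem_sInter]
      rw [hslz]
      have := hkey z Set.univ isClosed_univ
        (fun A => by simpa using (hcS A.2).1.1 z)
      simpa using this
    · intro z
      have hslz : sl (⋂₀ c) z = ⋂ A : c, sl A.1 z := by
        ext x
        simp [hsl, Set.mem_sInter]
      rw [hslz]
      exact IsCompact.of_isClosed_subset ((hcS hA₀).1.2.1 z)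
        (isClosed_iInter fun A => hcl A z) (Set.iInter_subset (fun A : c => sl A.1 z) ⟨A₀, hA₀⟩)
    · intro O hO
      rw [isOpen_iff_forall_mem_open]
      intro z hz
      simp only [Set.mem_setOf_eq] at hz
      have hslz : sl (⋂₀ c) z = ⋂ A : c, sl A.1 z := by
        ext x
        simp [hsl, Set.mem_sInter]
      have hex : ∃ A : c, sl A.1 z ⊆ O := by
        by_contra hcon
        push_neg at hcon
        have hne : ∀ A : c, (sl A.1 z ∩ Oᶜ).Nonempty := by
          intro A
          rcases Set.not_subset.1 (hcon A) with ⟨x, hx1, hx2⟩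
          exact ⟨x, hx1, hx2⟩
        obtain ⟨x, hx1, hx2⟩ := hkey z Oᶜ hO.isClosed_compl hne
        rw [← hslz] at hx1
        exact hx2 (hz hx1)
      obtain ⟨A, hA⟩ := hex
      refine ⟨{z' | sl A.1 z' ⊆ O}, ?_, (hcS A.2).1.2.2 O hO, hA⟩
      intro z' hz'
      simp only [Set.mem_setOf_eq] at hz' ⊢
      refine Set.Subset.trans ?_ hz'
      intro x hx
      exact (Set.sInter_subset_of_mem A.2) hx
    · intro z
      exact Set.Subset.trans (fun x hx => (Set.sInter_subset_of_mem hA₀) hx)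
        ((hcS hA₀).2 z)
  have hΦS : {p : Z × X | p.2 ∈ Φ p.1} ∈ S := by
    constructor
    · convert hΦ using 1; rfl
    · intro z
      exact Set.Subset.rfl
  obtain ⟨m, hmx, hmin⟩ := zorn_superset_nonempty S hchain _ hΦS
  refine ⟨sl m, ⟨hmin.1.1, ?_⟩, hmin.1.2⟩
  intro Ψ hΨ hΨsub
  have hgr : {p : Z × X | p.2 ∈ Ψ p.1} ∈ S := by
    constructor
    · convert hΨ using 1; rfl
    · intro z
      exact (hΨsub z).trans (hmin.1.2 z)
  have hsub : {p : Z × X | p.2 ∈ Ψ p.1} ⊆ m := fun p hp => hΨsub p.1 hp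
  have := hmin.2 hgr hsub
  funext z
  ext x
  exact ⟨fun hx => hΨsub z hx, fun hx => this hx⟩

end MinimalUscoAux

section GameAux

variable {X : Type v} [TopologicalSpace X] {Z : Type u} [TopologicalSpace Z]

/-- A legal prefix of a play in the determination game, recorded by the open sets in `Z`
whose `f`-images player `Σ` plays. -/
def GLegal (f : Z → X) (σ : (n : ℕ) → (Fin (n + 1) → Set X) → Set X) (n : ℕ)
    (U : ℕ → Set Z) : Prop :=
  (∀ k, k ≤ n → IsOpen (U k) ∧ (U k).Nonempty) ∧
  (∀ k, k < n → U (k + 1) ⊆ U k ∧ f '' U (k + 1) ⊆ σ k (fun i => f '' U i.1))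

/-- A good family of plays at level `n`. -/
def LevelGood (f : Z → X) (σ : (n : ℕ) → (Fin (n + 1) → Set X) → Set X) (n : ℕ)
    (S : Set (ℕ → Set Z)) : Prop :=
  (∀ U ∈ S, GLegal f σ n U) ∧
  (∀ U ∈ S, ∀ V ∈ S, U ≠ V → Disjoint (U n) (V n)) ∧
  Dense (⋃ U ∈ S, U n)

/-- Consecutive levels are linked: every play at level `n+1` extends a play at level `n`. -/
def LevelLinked (n : ℕ) (S S' : Set (ℕ → Set Z)) : Prop :=
  ∀ U ∈ S', ∃ V ∈ S, (∀ k, k < n → U k = V k) ∧ U n ⊆ V n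

variable {f : Z → X} {σ : (n : ℕ) → (Fin (n + 1) → Set X) → Set X}

lemma glegal_prefix {n : ℕ} {U : ℕ → Set Z} (h : GLegal f σ n U) :
    (f '' U 0).Nonempty ∧ ∀ k, k < n → (f '' U (k + 1)).Nonempty ∧
      f '' U (k + 1) ⊆ σ k (fun i => f '' U i.1) :=
  ⟨((h.1 0 (Nat.zero_le n)).2).image f,
    fun k hk => ⟨((h.1 (k + 1) hk).2).image f, (h.2 k hk).2⟩⟩

/-- Any legal play can be extended by one more step, localizing inside any given
nonempty open subset of its last move. -/
lemma gextend
    (hσ1 : ∀ (A : ℕ → Set X) (n : ℕ),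
      ((A 0).Nonempty ∧ ∀ k, k < n → (A (k + 1)).Nonempty ∧ A (k + 1) ⊆ σ k (fun i => A i.1)) →
      (σ n (fun i => A i.1)).Nonempty ∧
        ∃ V : Set X, IsOpen V ∧ σ n (fun i => A i.1) = A n ∩ V)
    (hf : QuasiContinuous f) (n : ℕ) (U : ℕ → Set Z) (hU : GLegal f σ n U)
    (W : Set Z) (hWo : IsOpen W) (hWne : W.Nonempty) (hWs : W ⊆ U n) :
    ∃ U', GLegal f σ (n + 1) U' ∧ (∀ k, k < n → U' k = U k) ∧
      U' n ⊆ U n ∧ U' (n + 1) ⊆ W := by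
  classical
  -- replay move `n` with `W`
  set Ub : ℕ → Set Z := fun k => if k = n then W else U k with hUb
  have hUbn : Ub n = W := by simp [hUb]
  have hUbk : ∀ k, k ≠ n → Ub k = U k := fun k hk => by simp [hUb, hk]
  have hUbLegal : GLegal f σ n Ub := by
    constructor
    · intro k hk
      rcases eq_or_ne k n with rfl | hkn
      · rw [hUbn]; exact ⟨hWo, hWne⟩
      · rw [hUbk k hkn]; exact hU.1 k hk
    · intro k hk
      have h1 : Ub k = U k := hUbk k (Nat.ne_of_lt hk)
      have hσarg : (fun i : Fin (k + 1) => f '' Ub i.1) = fun i => f '' U i.1 := by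
        funext i
        rw [hUbk i.1 (Nat.ne_of_lt (lt_of_lt_of_le i.2 hk))]
      rcases eq_or_ne (k + 1) n with hkn | hkn
      · subst hkn
        rw [hUbn, h1, hσarg]
        exact ⟨hWs.trans (hU.2 k hk).1, (Set.image_mono (f := f) hWs).trans (hU.2 k hk).2⟩
      · rw [hUbk (k + 1) hkn, h1, hσarg]
        exact hU.2 k hk
  obtain ⟨hne, V', hV'o, hV'eq⟩ := hσ1 (fun k => f '' Ub k) n (glegal_prefix hUbLegal)
  rw [hV'eq, hUbn] at hne
  obtain ⟨y, ⟨z, hzW, rfl⟩, hyV⟩ := hne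
  obtain ⟨U'', hU''o, hU''ne, hU''W, hU''V⟩ :=
    hf z W (hWo.mem_nhds hzW) V' (hV'o.mem_nhds hyV)
  set U' : ℕ → Set Z := fun k => if k = n + 1 then U'' else Ub k with hU'def
  have hU'top : U' (n + 1) = U'' := by simp [hU'def]
  have hU'k : ∀ k, k ≠ n + 1 → U' k = Ub k := fun k hk => by simp [hU'def, hk]
  refine ⟨U', ?_, ?_, ?_, ?_⟩
  · constructor
    · intro k hk
      rcases eq_or_ne k (n + 1) with rfl | hkn
      · rw [hU'top]; exact ⟨hU''o, hU''ne⟩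
      · rw [hU'k k hkn]
        exact hUbLegal.1 k (by omega)
    · intro k hk
      have hσarg : (fun i : Fin (k + 1) => f '' U' i.1) =
          fun i : Fin (k + 1) => f '' Ub i.1 := by
        funext i
        rw [hU'k i.1 (show i.1 ≠ n + 1 by have := i.2; omega)]
      rcases eq_or_ne (k + 1) (n + 1) with hkn | hkn
      · have hk' : k = n := Nat.succ_injective hkn
        subst hk'
        rw [hU'top, hU'k k (by omega), hσarg, hV'eq, hUbn]
        exact ⟨hU''W, Set.subset_inter ((Set.image_mono (f := f) hU''W)) hU''V⟩
      · have hk' : k < n := by omega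
        rw [hU'k (k + 1) hkn, hU'k k (by omega), hσarg]
        exact hUbLegal.2 k hk'
  · intro k hk
    rw [hU'k k (by omega)]
    exact hUbk k (by omega)
  · rw [hU'k n (by omega), hUbn]
    exact hWs
  · rw [hU'top]
    exact hU''W

lemma levelGood_zero [Nonempty Z] : LevelGood f σ 0 {fun _ => (Set.univ : Set Z)} := by
  refine ⟨?_, ?_, ?_⟩
  · rintro U rfl
    exact ⟨fun k _ => ⟨isOpen_univ, Set.univ_nonempty⟩, fun k hk => absurd hk (Nat.not_lt_zero k)⟩
  · rintro U rfl V rfl h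
    exact absurd rfl h
  · simp

lemma exists_levelGood_next
    (hσ1 : ∀ (A : ℕ → Set X) (n : ℕ),
      ((A 0).Nonempty ∧ ∀ k, k < n → (A (k + 1)).Nonempty ∧ A (k + 1) ⊆ σ k (fun i => A i.1)) →
      (σ n (fun i => A i.1)).Nonempty ∧
        ∃ V : Set X, IsOpen V ∧ σ n (fun i => A i.1) = A n ∩ V)
    (hf : QuasiContinuous f) (n : ℕ) (S : Set (ℕ → Set Z)) (hS : LevelGood f σ n S) :
    ∃ S', LevelGood f σ (n + 1) S' ∧ LevelLinked n S S' := by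
  classical
  -- candidate children
  set C : Set (ℕ → Set Z) := {U | GLegal f σ (n + 1) U ∧
    ∃ V ∈ S, (∀ k, k < n → U k = V k) ∧ U n ⊆ V n} with hC
  -- families of children with pairwise disjoint tops, as sets of graphs to use Zorn on sets
  set F : Set (Set (ℕ → Set Z)) := {T | T ⊆ C ∧
    ∀ U ∈ T, ∀ V ∈ T, U ≠ V → Disjoint (U (n + 1)) (V (n + 1))} with hF
  have hzorn : ∃ M, Maximal (· ∈ F) M := by
    apply zorn_subset
    intro c hcF hchain
    refine ⟨⋃₀ c, ⟨?_, ?_⟩, fun s hs => Set.subset_sUnion_of_mem hs⟩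
    · intro U hU
      obtain ⟨T, hTc, hUT⟩ := hU
      exact (hcF hTc).1 hUT
    · intro U hU V hV hUV
      obtain ⟨T1, hT1c, hUT1⟩ := hU
      obtain ⟨T2, hT2c, hVT2⟩ := hV
      rcases hchain.total hT1c hT2c with h | h
      · exact (hcF hT2c).2 U (h hUT1) V hVT2 hUV
      · exact (hcF hT1c).2 U hUT1 V (h hVT2) hUV
  obtain ⟨M, hMF, hMmax⟩ := hzorn
  refine ⟨M, ⟨fun U hU => (hMF.1 hU).1, fun U hU V hV h => hMF.2 U hU V hV h, ?_⟩,
    fun U hU => (hMF.1 hU).2⟩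
  -- density of the union of tops
  rw [dense_iff_inter_open]
  intro G hGo hGne
  by_contra hcon
  rw [Set.not_nonempty_iff_eq_empty] at hcon
  have hGd : ∀ U ∈ M, U (n + 1) ∩ G = ∅ := by
    intro U hU
    rw [← Set.subset_empty_iff, ← hcon]
    intro x hx
    exact ⟨hx.2, Set.mem_biUnion hU hx.1⟩
  -- find a parent whose top meets G
  obtain ⟨z₀, hz₀G, hz₀V⟩ := hS.2.2.inter_open_nonempty G hGo hGne
  obtain ⟨V, hVS, hz₀⟩ := Set.mem_iUnion₂.1 hz₀V
  have hVleg : GLegal f σ n V := hS.1 V hVS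
  have hVno : IsOpen (V n) := (hVleg.1 n le_rfl).1
  -- extend V into G ∩ V n
  obtain ⟨U', hU'leg, hU'eq, hU'n, hU'top⟩ := gextend hσ1 hf n V hVleg (G ∩ V n)
    (hGo.inter hVno) ⟨z₀, hz₀G, hz₀⟩ Set.inter_subset_right
  have hU'C : U' ∈ C := ⟨hU'leg, V, hVS, hU'eq, hU'n⟩
  have hU'G : U' (n + 1) ⊆ G := hU'top.trans Set.inter_subset_left
  have hU'ne : (U' (n + 1)).Nonempty := (hU'leg.1 (n + 1) le_rfl).2
  have hU'M : U' ∉ M := by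
    intro h
    obtain ⟨x, hx⟩ := hU'ne
    have := hGd U' h
    rw [← Set.subset_empty_iff] at this
    exact this ⟨hx, hU'G hx⟩
  have hins : insert U' M ∈ F := by
    refine ⟨?_, ?_⟩
    · intro U hU
      rcases hU with rfl | hU
      · exact hU'C
      · exact hMF.1 hU
    · intro U hU W hW hUW
      rcases hU with rfl | hU <;> rcases hW with rfl | hW
      · exact absurd rfl hUW
      · refine Set.disjoint_left.2 fun x hx1 hx2 => ?_
        have := hGd W hW
        rw [← Set.subset_empty_iff] at this
        exact this ⟨hx2, hU'G hx1⟩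
      · refine Set.disjoint_left.2 fun x hx1 hx2 => ?_
        have := hGd U hU
        rw [← Set.subset_empty_iff] at this
        exact this ⟨hx1, hU'G hx2⟩
      · exact hMF.2 U hU W hW hUW
  exact hU'M (hMmax hins (Set.subset_insert U' M) (Set.mem_insert U' M))

end GameAux

section SeqChoice

lemma exists_seq_of_step {A : Type*} (G : ℕ → A → Prop) (L : ℕ → A → A → Prop)
    (h0 : ∃ a, G 0 a) (hs : ∀ n a, G n a → ∃ b, G (n + 1) b ∧ L n a b) :
    ∃ v : ℕ → A, (∀ n, G n (v n)) ∧ ∀ n, L n (v n) (v (n + 1)) := by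
  choose F hF1 hF2 using hs
  let v : ∀ n : ℕ, {a : A // G n a} := fun n =>
    Nat.rec ⟨h0.choose, h0.choose_spec⟩ (fun n p => ⟨F n p.1 p.2, hF1 n p.1 p.2⟩) n
  exact ⟨fun n => (v n).1, fun n => (v n).2, fun n => hF2 n (v n).1 (v n).2⟩

end SeqChoice

section KeyLemma

variable {X : Type v} [TopologicalSpace X] [T35Space X] {Z : Type u} [TopologicalSpace Z]

/-- The key construction: for a quasicontinuous map from a nonempty Baire space into a
game determined Tychonoff space there is a dense `Gδ` subset `D` of the domain carrying a
minimal usco map whose single-valuedness points are continuity points of `f`. -/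
lemma key_lemma (hX : GameDetermined X) [BaireSpace Z] [Nonempty Z]
    {f : Z → X} (hf : QuasiContinuous f) :
    ∃ D : Set Z, Dense D ∧ IsGδ D ∧ ∃ Φm : ↥D → Set X, IsMinimalUsco Φm ∧
      ∀ z : ↥D, SingleValuedAt Φm z → ContinuousAt f z.1 := by
  classical
  obtain ⟨σ, hσ1, hσ2⟩ := hX
  obtain ⟨V, hVG, hVL⟩ := exists_seq_of_step (LevelGood f σ) LevelLinked
    ⟨_, levelGood_zero⟩ (fun n S hS => exists_levelGood_next hσ1 hf n S hS)
  set D : Set Z := ⋂ n, ⋃ U ∈ V n, U n with hD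
  have hDo : ∀ n, IsOpen (⋃ U ∈ V n, U n) :=
    fun n => isOpen_biUnion (fun U hU => (((hVG n).1 U hU).1 n le_rfl).1)
  have hDdense : Dense D := dense_iInter_of_isOpen hDo (fun n => (hVG n).2.2)
  have hDgδ : IsGδ D := .iInter (fun n => (hDo n).isGδ)
  have hmem : ∀ z : Z, z ∈ D → ∀ n, ∃ U, U ∈ V n ∧ z ∈ U n := by
    intro z hz n
    obtain ⟨U, hU, hzU⟩ := Set.mem_iUnion₂.1 (Set.mem_iInter.1 hz n)
    exact ⟨U, hU, hzU⟩
  choose! node hnodeV hnodez using hmem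
  have huniq : ∀ n (U : ℕ → Set Z), U ∈ V n → ∀ (U' : ℕ → Set Z), U' ∈ V n →
      ∀ z, z ∈ U n → z ∈ U' n → U = U' := by
    intro n U hU U' hU' z hz hz'
    by_contra h
    exact Set.disjoint_left.1 ((hVG n).2.1 U hU U' hU' h) hz hz'
  have hpar : ∀ z, z ∈ D → ∀ n, (∀ k, k < n → node z (n + 1) k = node z n k) ∧
      node z (n + 1) n ⊆ node z n n := by
    intro z hz n
    obtain ⟨W, hWS, hagree, hsub⟩ := hVL n (node z (n + 1)) (hnodeV z hz (n + 1))
    have h1 : node z (n + 1) (n + 1) ⊆ node z (n + 1) n :=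
      (((hVG (n + 1)).1 _ (hnodeV z hz (n + 1))).2 n (Nat.lt_succ_self n)).1
    have hzW : z ∈ W n := hsub (h1 (hnodez z hz (n + 1)))
    have hWeq : W = node z n := huniq n W hWS (node z n) (hnodeV z hz n) z hzW (hnodez z hz n)
    rw [← hWeq]
    exact ⟨hagree, hsub⟩
  have hstab : ∀ z, z ∈ D → ∀ k m, k < m → node z m k = node z (k + 1) k := by
    intro z hz k m hkm
    induction m with
    | zero => omega
    | succ m ih =>
      rcases eq_or_ne k m with rfl | h
      · rfl
      · have hkm' : k < m := by omega
        rw [(hpar z hz m).1 k hkm', ih hkm']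
  set Q : Z → ℕ → Set Z := fun z k => node z (k + 1) k with hQ
  set A : Z → ℕ → Set X := fun z k => f '' Q z k with hA
  have hQz : ∀ z, z ∈ D → ∀ k, z ∈ Q z k := by
    intro z hz k
    exact (((hVG (k + 1)).1 _ (hnodeV z hz (k + 1))).2 k (Nat.lt_succ_self k)).1
      (hnodez z hz (k + 1))
  have hlegal : ∀ z, z ∈ D → (A z 0).Nonempty ∧
      ∀ k, (A z (k + 1)).Nonempty ∧ A z (k + 1) ⊆ σ k (fun i => A z i.1) := by
    intro z hz
    refine ⟨⟨f z, Set.mem_image_of_mem f (hQz z hz 0)⟩, ?_⟩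
    intro k
    have hleg : GLegal f σ (k + 2) (node z (k + 2)) := (hVG (k + 2)).1 _ (hnodeV z hz (k + 2))
    have hstep := (hleg.2 k (by omega)).2
    have harg : (fun i : Fin (k + 1) => f '' node z (k + 2) i.1) =
        (fun i : Fin (k + 1) => A z i.1) := by
      funext i
      have h1 : node z (k + 2) i.1 = node z (i.1 + 1) i.1 :=
        hstab z hz i.1 (k + 2) (by have := i.2; omega)
      simp only [hA, hQ]
      rw [h1]
    constructor
    · exact ⟨f z, Set.mem_image_of_mem f (hQz z hz (k + 1))⟩
    · have h2 : A z (k + 1) = f '' node z (k + 2) (k + 1) := by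
        simp only [hA, hQ]
      rw [h2, ← harg]
      exact hstep
  set K : Z → Set X := fun z => ⋂ n, closure (A z n) with hK
  have hfK : ∀ z, z ∈ D → f z ∈ K z := fun z hz =>
    Set.mem_iInter.2 (fun n => subset_closure (Set.mem_image_of_mem f (hQz z hz n)))
  have hKc : ∀ z, z ∈ D → IsCompact (K z) := fun z hz => (hσ2 (A z) (hlegal z hz)).1
  have habs : ∀ z, z ∈ D → ∀ O, IsOpen O → K z ⊆ O → ∃ m, ∀ n, m ≤ n → A z n ⊆ O := by
    intro z hz
    rcases (hσ2 (A z) (hlegal z hz)).2 with h | h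
    · intro O hO hKO
      exfalso
      have h2 : f z ∈ ⋂ n, closure (A z n) := hfK z hz
      rw [h] at h2
      exact h2
    · exact h
  set T : Z → ℕ → Set Z := fun z n => node z n n with hT
  have hTz : ∀ z, z ∈ D → ∀ n, z ∈ T z n := fun z hz n => hnodez z hz n
  have hTopen : ∀ z, z ∈ D → ∀ n, IsOpen (T z n) := fun z hz n =>
    (((hVG n).1 _ (hnodeV z hz n)).1 n le_rfl).1
  have hTQ : ∀ z, z ∈ D → ∀ k, T z (k + 1) ⊆ Q z k := by
    intro z hz k
    exact (((hVG (k + 1)).1 _ (hnodeV z hz (k + 1))).2 k (Nat.lt_succ_self k)).1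
  have hQT : ∀ z, z ∈ D → ∀ k, Q z k ⊆ T z k := fun z hz k => (hpar z hz k).2
  have hloc : ∀ z, z ∈ D → ∀ z', z' ∈ D → ∀ m, z' ∈ T z m → node z' m = node z m :=
    fun z hz z' hz' m hm =>
      huniq m (node z' m) (hnodeV z' hz' m) (node z m) (hnodeV z hz m) z'
        (hnodez z' hz' m) hm
  set Φ₀ : Z → Set X := fun z =>
    ⋂ (U : Set Z) (_ : IsOpen U ∧ z ∈ U), closure (f '' U) with hΦ₀
  have hΦ₀closed : ∀ z, IsClosed (Φ₀ z) :=
    fun z => isClosed_iInter (fun U => isClosed_iInter (fun _ => isClosed_closure))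
  have hfΦ₀ : ∀ z, f z ∈ Φ₀ z := fun z => Set.mem_iInter.2 fun U =>
    Set.mem_iInter.2 fun hU => subset_closure (Set.mem_image_of_mem f hU.2)
  have hΦ₀sub : ∀ z U, IsOpen U → z ∈ U → Φ₀ z ⊆ closure (f '' U) := by
    intro z U hUo hzU x hx
    exact Set.mem_iInter.1 (Set.mem_iInter.1 hx U) ⟨hUo, hzU⟩
  set Ψ : ↥D → Set X := fun z => K z.1 ∩ Φ₀ z.1 with hΨ
  have hΨusco : IsUsco Ψ := by
    refine ⟨fun z => ⟨f z.1, hfK z.1 z.2, hfΦ₀ z.1⟩,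
      fun z => (hKc z.1 z.2).inter_right (hΦ₀closed z.1), ?_⟩
    intro O hO
    rw [isOpen_iff_forall_mem_open]
    rintro ⟨z, hz⟩ hmemO
    simp only [Set.mem_setOf_eq, hΨ] at hmemO
    -- a compactness extraction to localize `Φ₀`
    have hCc : IsCompact (K z ∩ Oᶜ) := (hKc z hz).inter_right hO.isClosed_compl
    have hcover : K z ∩ Oᶜ ⊆
        ⋃ (i : {U : Set Z // IsOpen U ∧ z ∈ U}), (closure (f '' i.1))ᶜ := by
      rintro x ⟨hx1, hx2⟩
      have hxΦ : x ∉ Φ₀ z := fun hx => hx2 (hmemO ⟨hx1, hx⟩)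
      simp only [hΦ₀, Set.mem_iInter, not_forall] at hxΦ
      obtain ⟨U, hU, hxU⟩ := hxΦ
      exact Set.mem_iUnion.2 ⟨⟨U, hU⟩, hxU⟩
    obtain ⟨t, ht⟩ := hCc.elim_finite_subcover _
      (fun i : {U : Set Z // IsOpen U ∧ z ∈ U} => isClosed_closure.isOpen_compl) hcover
    set U₀ : Set Z := ⋂ i ∈ t, (i : {U : Set Z // IsOpen U ∧ z ∈ U}).1 with hU₀
    have hU₀o : IsOpen U₀ := isOpen_biInter_finset (fun i _ => i.2.1)
    have hzU₀ : z ∈ U₀ := Set.mem_iInter₂.2 (fun i _ => i.2.2)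
    have hKO' : K z ⊆ O ∪ (closure (f '' U₀))ᶜ := by
      intro x hx
      by_cases hxO : x ∈ O
      · exact Or.inl hxO
      · obtain ⟨i, hit, hxi⟩ := Set.mem_iUnion₂.1 (ht ⟨hx, hxO⟩)
        refine Or.inr fun hcl => hxi ?_
        exact closure_mono (Set.image_mono (f := f) (Set.biInter_subset_of_mem hit)) hcl
    have hO'o : IsOpen (O ∪ (closure (f '' U₀))ᶜ) := hO.union isClosed_closure.isOpen_compl
    obtain ⟨O₁, hO₁o, hKO₁, hclO₁⟩ := (hKc z hz).exists_isOpen_closure_subset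
      (hO'o.mem_nhdsSet.2 hKO')
    obtain ⟨m, hm⟩ := habs z hz O₁ hO₁o hKO₁
    set Nb : Set Z := T z (m + 1) ∩ U₀ with hNb
    have hNbo : IsOpen Nb := (hTopen z hz (m + 1)).inter hU₀o
    have hzNb : z ∈ Nb := ⟨hTz z hz (m + 1), hzU₀⟩
    refine ⟨Subtype.val ⁻¹' Nb, ?_, hNbo.preimage continuous_subtype_val, hzNb⟩
    rintro ⟨w, hwD⟩ hwNb
    simp only [Set.mem_preimage] at hwNb
    have hw1 : w ∈ T z (m + 1) := hwNb.1
    have hnodeeq : node w (m + 1) = node z (m + 1) := hloc z hz w hwD (m + 1) hw1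
    have hQsub : Q w (m + 1) ⊆ T z (m + 1) := by
      have h1 : Q w (m + 1) ⊆ T w (m + 1) := hQT w hwD (m + 1)
      simpa only [hT, hnodeeq] using h1
    have hAsub : A w (m + 1) ⊆ O₁ := by
      have h1 : A w (m + 1) = f '' Q w (m + 1) := by simp only [hA]
      rw [h1]
      refine Set.Subset.trans (Set.image_mono (f := f) (hQsub.trans (hTQ z hz m))) ?_
      have h2 : f '' Q z m ⊆ O₁ := by
        have h3 := hm m le_rfl
        simpa only [hA] using h3
      exact h2
    have hKsub : K w ⊆ closure O₁ := by
      intro x hx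
      have h1 : x ∈ closure (A w (m + 1)) := Set.mem_iInter.1 hx (m + 1)
      exact closure_mono hAsub h1
    have hΦ₀w : Φ₀ w ⊆ closure (f '' U₀) := hΦ₀sub w U₀ hU₀o hwNb.2
    intro x hx
    obtain ⟨hx1, hx2⟩ := hx
    rcases hclO₁ (hKsub hx1) with h | h
    · exact h
    · exact absurd (hΦ₀w hx2) h
  obtain ⟨Φm, hΦm, hΦmsub⟩ := hΨusco.exists_minimal
  refine ⟨D, hDdense, hDgδ, Φm, hΦm, ?_⟩
  rintro ⟨z, hz⟩ ⟨x, hx⟩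
  have hstep1 : ∀ O : Set X, IsOpen O → x ∈ O → ∃ U : Set Z, IsOpen U ∧ z ∈ U ∧ f '' U ⊆ O := by
    intro O hO hxO
    obtain ⟨C, hCn, hCc, hCsub⟩ := exists_mem_nhds_isClosed_subset (hO.mem_nhds hxO)
    set O₁ : Set X := interior C with hO₁
    have hO₁o : IsOpen O₁ := isOpen_interior
    have hxO₁ : x ∈ O₁ := mem_interior_iff_mem_nhds.2 hCn
    have hclO₁ : closure O₁ ⊆ O := (closure_minimal interior_subset hCc).trans hCsub
    have hopen : IsOpen {w : ↥D | Φm w ⊆ O₁} := hΦm.1.2.2 O₁ hO₁o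
    obtain ⟨U₁, hU₁o, hU₁eq⟩ := isOpen_induced_iff.1 hopen
    have hmem1 : (⟨z, hz⟩ : ↥D) ∈ {w : ↥D | Φm w ⊆ O₁} := by
      rw [Set.mem_setOf_eq, hx]
      simpa using hxO₁
    have hzU₁ : z ∈ U₁ := by
      rw [← hU₁eq] at hmem1
      exact hmem1
    by_contra hcon
    push_neg at hcon
    obtain ⟨y, hyU, hyO⟩ := Set.not_subset.1 (hcon U₁ hU₁o hzU₁)
    obtain ⟨z₁, hz₁U, rfl⟩ := hyU
    have hfz₁ : f z₁ ∈ (closure O₁)ᶜ := fun h => hyO (hclO₁ h)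
    obtain ⟨Vv, hVo, hVne, hVU, hVsub⟩ := hf z₁ U₁ (hU₁o.mem_nhds hz₁U) (closure O₁)ᶜ
      (isClosed_closure.isOpen_compl.mem_nhds hfz₁)
    obtain ⟨w₀, hw₀V, hw₀D⟩ := hDdense.inter_open_nonempty Vv hVo hVne
    have hw : (⟨w₀, hw₀D⟩ : ↥D) ∈ {w : ↥D | Φm w ⊆ O₁} := by
      rw [← hU₁eq]
      exact hVU hw₀V
    have h2 : Φm ⟨w₀, hw₀D⟩ ⊆ closure ((closure O₁)ᶜ) := by
      intro y hy
      exact closure_mono hVsub (hΦ₀sub w₀ Vv hVo hw₀V ((hΦmsub ⟨w₀, hw₀D⟩ hy).2))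
    obtain ⟨y₀, hy₀⟩ := hΦm.1.1 ⟨w₀, hw₀D⟩
    have hy₀O₁ : y₀ ∈ O₁ := hw hy₀
    have hy₀cl : y₀ ∈ closure ((closure O₁)ᶜ) := h2 hy₀
    have hmix : y₀ ∈ closure (O₁ ∩ (closure O₁)ᶜ) := hO₁o.inter_closure ⟨hy₀O₁, hy₀cl⟩
    have hemp : O₁ ∩ (closure O₁)ᶜ = ∅ :=
      Set.eq_empty_of_forall_notMem (fun a ⟨ha1, ha2⟩ => ha2 (subset_closure ha1))
    rw [hemp, closure_empty] at hmix
    exact hmix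
  have hfzx : f z = x := by
    by_contra hne
    obtain ⟨U, hUo, hzU, hUsub⟩ := hstep1 {f z}ᶜ isOpen_compl_singleton
      (by simpa using fun h => hne h.symm)
    exact hUsub (Set.mem_image_of_mem f hzU) rfl
  rw [ContinuousAt, Filter.tendsto_def]
  intro s hs
  obtain ⟨O, hOsub, hOo, hfO⟩ := mem_nhds_iff.1 hs
  obtain ⟨U, hUo, hzU, hUsub⟩ := hstep1 O hOo (hfzx ▸ hfO)
  rw [mem_nhds_iff]
  exact ⟨U, fun u hu => hOsub (hUsub (Set.mem_image_of_mem f hu)), hUo, hzU⟩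

end KeyLemma

section Transfer

variable {Z : Type*} [TopologicalSpace Z]

lemma dense_val_image {D : Set Z} (hD : Dense D) {t : Set ↥D} (ht : Dense t) :
    Dense (Subtype.val '' t) := by
  rw [dense_iff_inter_open]
  intro G hGo hGne
  obtain ⟨z, hzG, hzD⟩ := hD.inter_open_nonempty G hGo hGne
  have hpre : IsOpen (Subtype.val ⁻¹' G : Set ↥D) := hGo.preimage continuous_subtype_val
  obtain ⟨w, hwG, hwt⟩ := ht.inter_open_nonempty _ hpre ⟨⟨z, hzD⟩, hzG⟩
  exact ⟨w.1, hwG, w, hwt, rfl⟩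

lemma isGδ_val_image {D : Set Z} (hD : IsGδ D) {t : Set ↥D} (ht : IsGδ t) :
    IsGδ (Subtype.val '' t) := by
  classical
  obtain ⟨T, hTo, hTc, rfl⟩ := ht
  have hex : ∀ s ∈ T, ∃ O : Set Z, IsOpen O ∧ s = Subtype.val ⁻¹' O := by
    intro s hs
    obtain ⟨O, hOo, hOeq⟩ := isOpen_induced_iff.1 (hTo s hs)
    exact ⟨O, hOo, hOeq.symm⟩
  choose! O hOo hOeq using hex
  have himg : Subtype.val '' (⋂₀ T) = D ∩ ⋂ s ∈ T, O s := by
    ext z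
    constructor
    · rintro ⟨w, hw, rfl⟩
      refine ⟨w.2, Set.mem_iInter₂.2 fun s hs => ?_⟩
      have h1 := Set.mem_sInter.1 hw s hs
      rw [hOeq s hs] at h1
      exact h1
    · rintro ⟨hzD, hz2⟩
      refine ⟨⟨z, hzD⟩, Set.mem_sInter.2 fun s hs => ?_, rfl⟩
      rw [hOeq s hs]
      exact Set.mem_iInter₂.1 hz2 s hs
  rw [himg]
  exact hD.inter (.biInter hTc (fun s hs => (hOo s hs).isGδ))

lemma residual_val_image {D : Set Z} (hBD : BaireSpace ↥D) (hDd : Dense D) (hDg : IsGδ D)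
    {S : Set ↥D} (hS : S ∈ residual ↥D) : Subtype.val '' S ∈ residual Z := by
  haveI := hBD
  obtain ⟨t, hts, htg, htd⟩ := mem_residual.1 hS
  exact Filter.mem_of_superset
    (residual_of_dense_Gδ (isGδ_val_image hDg htg) (dense_val_image hDd htd))
    (Set.image_mono hts)

end Transfer

/-- For a class `𝒞` (= `P`) of Baire spaces closed under taking dense
`Gδ`-subsets, a game determined Tychonoff space `X` is (strong) `𝒞`-Piotrowski if and only
if it is (strong) `𝒞`-Stegall. -/
theorem piotrowski_iff_stegall_of_gameDetermined (P : SpaceClass.{u}) (hB : IsBaireClass P)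
    (hGδ : ClosedUnderDenseGdelta P)
    (X : Type v) [TopologicalSpace X] [T35Space X] (hX : GameDetermined X) :
    (IsPiotrowskiFor P X ↔ IsStegallFor P X) ∧
    (IsStrongPiotrowskiFor P X ↔ IsStrongStegallFor P X) := by
  classical
  have hPS : IsPiotrowskiFor P X → IsStegallFor P X := by
    intro h Z tZ hZ hne Φ hΦ
    set g : Z → X := fun z => (hΦ.1.1 z).some with hg
    have hsel : ∀ z, g z ∈ Φ z := fun z => (hΦ.1.1 z).some_mem
    obtain ⟨z, hc⟩ := h Z hZ hne g (hΦ.quasiContinuous_selection hsel)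
    exact ⟨z, hΦ.singleValuedAt_of_continuousAt hsel hc⟩
  have hSP : IsStegallFor P X → IsPiotrowskiFor P X := by
    intro h Z tZ hZ hne f hf
    haveI := hB Z hZ
    haveI := hne
    obtain ⟨D, hDd, hDg, Φm, hΦm, hcont⟩ := key_lemma hX hf
    have hDP : P ↥D inferInstance := hGδ Z hZ D hDd hDg
    haveI : Nonempty ↥D := (hDd.nonempty).to_subtype
    obtain ⟨z, hz⟩ := h ↥D hDP ‹Nonempty ↥D› Φm hΦm
    exact ⟨z.1, hcont z hz⟩
  have hPS' : IsStrongPiotrowskiFor P X → IsStrongStegallFor P X := by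
    intro h Z tZ hZ Φ hΦ
    set g : Z → X := fun z => (hΦ.1.1 z).some with hg
    have hsel : ∀ z, g z ∈ Φ z := fun z => (hΦ.1.1 z).some_mem
    refine Filter.mem_of_superset (h Z hZ g (hΦ.quasiContinuous_selection hsel)) ?_
    intro z hc
    exact hΦ.singleValuedAt_of_continuousAt hsel hc
  have hSP' : IsStrongStegallFor P X → IsStrongPiotrowskiFor P X := by
    intro h Z tZ hZ f hf
    haveI := hB Z hZ
    rcases isEmpty_or_nonempty Z with hemp | hne
    · have huniv : ContinuityPoints f = Set.univ :=
        Set.eq_univ_of_forall (fun z => isEmptyElim z)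
      rw [huniv]
      exact Filter.univ_mem
    · obtain ⟨D, hDd, hDg, Φm, hΦm, hcont⟩ := key_lemma hX hf
      have hDP : P ↥D inferInstance := hGδ Z hZ D hDd hDg
      have hres := h ↥D hDP Φm hΦm
      have hsub : Subtype.val '' {z : ↥D | SingleValuedAt Φm z} ⊆ ContinuityPoints f := by
        rintro _ ⟨w, hw, rfl⟩
        exact hcont w hw
      exact Filter.mem_of_superset (residual_val_image (hB ↥D hDP) hDd hDg hres) hsub
  exact ⟨⟨hPS, hSP⟩, ⟨hPS', hSP'⟩⟩
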